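/- Let U ⊆ ℝ⁴ be open, let E: U → ℝ^{4×4} be a C¹ matrix-valued map with E(x) invertible for every x ∈ U (components E_α^μ, frame index α, coordinate index μ), let Θ(x) := E(x)^{−1} (components Θ^α_μ), and let ρ_M: U → (0,∞) be C¹. Suppose the divergence constraint Σ_μ ∂_μ(ρ_M·E_α^μ) = 0 holds on U for every α. Define the Weitzenböck torsion T^α_{μν} := ∂_μ Θ^α_ν − ∂_ν Θ^α_μ. Then for every x ∈ U and every index μ: Σ_{α,σ} E_α^σ(x)·T^α_{σμ}(x) = ∂_μ log(ρ_M(x)·|det E(x)|). -/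

import Mathlib

open Real Set

/-- The partial derivative `∂_μ f x` of a scalar function on `ℝ⁴`. -/
noncomputable def pd (μ : Fin 4) (f : (Fin 4 → ℝ) → ℝ) (x : Fin 4 → ℝ) : ℝ :=
  fderiv ℝ f x (Pi.single μ 1)

/-- The Weitzenböck torsion `T^α_{μν} = ∂_μ Θ^α_ν − ∂_ν Θ^α_μ` of the coframe
`Θ(x) = E(x)⁻¹` (components `Θ^α_μ = (E x)⁻¹ μ α`). -/
noncomputable def torsion (E : (Fin 4 → ℝ) → Matrix (Fin 4) (Fin 4) ℝ)
    (α μ ν : Fin 4) (x : Fin 4 → ℝ) : ℝ :=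
  pd μ (fun y => (E y)⁻¹ ν α) x - pd ν (fun y => (E y)⁻¹ μ α) x

namespace TorsionAux

/-- The determinant of a `4×4` real matrix, as a multilinear map in the rows. -/
noncomputable def detML : MultilinearMap ℝ (fun _ : Fin 4 => (Fin 4 → ℝ)) ℝ :=
  (Matrix.detRowAlternating : (Fin 4 → ℝ) [⋀^Fin 4]→ₗ[ℝ] ℝ).toMultilinearMap

lemma detML_apply (M : Matrix (Fin 4) (Fin 4) ℝ) : detML (fun i => M i) = M.det := rfl

lemma detML_bound (m : (Fin 4) → (Fin 4 → ℝ)) : ‖detML m‖ ≤ 24 * ∏ i, ‖m i‖ := by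
  have h₀ : detML m = ∑ p : Equiv.Perm (Fin 4),
      ((Equiv.Perm.sign p : ℤ) : ℝ) * ∏ i, m (p i) i := by
    have : detML m = (Matrix.of m).det := rfl
    rw [this, Matrix.det_apply]
    refine Finset.sum_congr rfl fun p _ => ?_
    simp [Units.smul_def, zsmul_eq_mul]
  rw [h₀]
  calc ‖∑ p : Equiv.Perm (Fin 4), ((Equiv.Perm.sign p : ℤ) : ℝ) * ∏ i, m (p i) i‖
      ≤ ∑ p : Equiv.Perm (Fin 4), ‖((Equiv.Perm.sign p : ℤ) : ℝ) * ∏ i, m (p i) i‖ :=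
        norm_sum_le _ _
    _ ≤ ∑ _ : Equiv.Perm (Fin 4), ∏ i, ‖m i‖ := by
        refine Finset.sum_le_sum fun p _ => ?_
        have h1 : ‖((Equiv.Perm.sign p : ℤ) : ℝ)‖ = 1 := by
          rcases Int.units_eq_one_or (Equiv.Perm.sign p) with h | h <;> simp [h]
        rw [norm_mul, h1, one_mul]
        have h2 : ‖∏ i, m (p i) i‖ ≤ ∏ i, ‖m (p i)‖ := by
          rw [norm_prod]
          exact Finset.prod_le_prod (fun i _ => norm_nonneg _)
            (fun i _ => norm_le_pi_norm (m (p i)) i)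
        calc ‖∏ i, m (p i) i‖ ≤ ∏ i, ‖m (p i)‖ := h2
          _ = ∏ i, ‖m i‖ := Equiv.prod_comp p (fun k => ‖m k‖)
    _ = 24 * ∏ i, ‖m i‖ := by
        rw [Finset.sum_const, Finset.card_univ, Fintype.card_perm]
        norm_num [Nat.factorial]

/-- The determinant as a continuous multilinear map in the rows. -/
noncomputable def detCML : ContinuousMultilinearMap ℝ (fun _ : Fin 4 => (Fin 4 → ℝ)) ℝ :=
  detML.mkContinuous 24 detML_bound

lemma detCML_apply (m : (Fin 4) → (Fin 4 → ℝ)) : detCML m = (Matrix.of m).det := rfl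

/-- Row expansion of the determinant of a row update, in terms of the adjugate. -/
lemma det_updateRow_eq (A : Matrix (Fin 4) (Fin 4) ℝ) (i : Fin 4) (b : Fin 4 → ℝ) :
    (A.updateRow i b).det = ∑ j, b j * A.adjugate j i := by
  have main : ∀ s : Finset (Fin 4), ∀ c : Fin 4 → ℝ,
      (A.updateRow i (∑ j ∈ s, c j • (Pi.single j 1 : Fin 4 → ℝ))).det
        = ∑ j ∈ s, c j * A.adjugate j i := by
    intro s
    induction s using Finset.induction_on with
    | empty =>
        intro c
        rw [Finset.sum_empty, Finset.sum_empty]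
        exact Matrix.det_eq_zero_of_row_eq_zero i (fun j => by simp)
    | @insert k s hk ih =>
        intro c
        rw [Finset.sum_insert hk, Finset.sum_insert hk, Matrix.det_updateRow_add,
          Matrix.det_updateRow_smul, ih, Matrix.adjugate_apply]
  have hb : b = ∑ j, b j • (Pi.single j 1 : Fin 4 → ℝ) := by
    funext k
    rw [Finset.sum_apply]
    simp [Pi.single_apply]
  conv_lhs => rw [hb]
  exact main Finset.univ b

/-- Jacobi's formula: the derivative of `y ↦ det (F y)` for a matrix-valued map `F`
with differentiable entries. -/
lemma hasFDerivAt_det {F : (Fin 4 → ℝ) → Matrix (Fin 4) (Fin 4) ℝ} {x : Fin 4 → ℝ}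
    {F' : Fin 4 → Fin 4 → ((Fin 4 → ℝ) →L[ℝ] ℝ)}
    (hF : ∀ i j, HasFDerivAt (fun y => F y i j) (F' i j) x) :
    HasFDerivAt (fun y => (F y).det)
      (∑ i, ∑ j, (F x).adjugate j i • F' i j) x := by
  have hrow : ∀ i, HasFDerivAt (fun y => F y i) (ContinuousLinearMap.pi (F' i)) x :=
    fun i => hasFDerivAt_pi.2 (fun j => hF i j)
  have h := HasFDerivAt.multilinear_comp (f := detCML) hrow
  have hfun : (fun y => detCML (fun i => F y i)) = fun y => (F y).det := by
    funext y
    exact detCML_apply (F y)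
  rw [hfun] at h
  have hder : (∑ i : Fin 4, (detCML.toContinuousLinearMap (fun j => F x j) i) ∘L
      (ContinuousLinearMap.pi (F' i))) = ∑ i, ∑ j, (F x).adjugate j i • F' i j := by
    ext v
    rw [ContinuousLinearMap.sum_apply, ContinuousLinearMap.sum_apply]
    refine Finset.sum_congr rfl fun i _ => ?_
    rw [ContinuousLinearMap.comp_apply, ContinuousMultilinearMap.toContinuousLinearMap_apply,
      ContinuousLinearMap.sum_apply]
    have harg : Function.update (fun j => F x j) i (ContinuousLinearMap.pi (F' i) v)
        = fun j => ((F x).updateRow i (fun k => F' i k v)) j := by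
      funext j
      rcases eq_or_ne j i with rfl | hj
      · rw [Function.update_self, Matrix.updateRow_self]
        funext k
        simp
      · rw [Function.update_of_ne hj, Matrix.updateRow_ne hj]
    rw [harg, detCML_apply ((F x).updateRow i (fun k => F' i k v)),
      show (Matrix.of ((F x).updateRow i fun k => (F' i k) v))
        = (F x).updateRow i (fun k => F' i k v) from rfl, det_updateRow_eq]
    refine Finset.sum_congr rfl fun j _ => ?_
    rw [ContinuousLinearMap.smul_apply, smul_eq_mul, mul_comm]
  rw [hder] at h
  exact h

end TorsionAux

/-- Let `U ⊆ ℝ⁴` be open, `E : U → ℝ^{4×4}` a C¹ invertible frame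
(components `E_α^μ = E x α μ`), and `ρ_M : U → (0,∞)` C¹. If the divergence constraint
`∑_μ ∂_μ(ρ_M E_α^μ) = 0` holds on `U` for every `α`, then for all `x ∈ U` and every `μ`:
`∑_{α,σ} E_α^σ T^α_{σμ} = ∂_μ log(ρ_M·|det E|)`, i.e. the trace of the Weitzenböck torsion
is the gradient of the logarithm of the dilaton factor. -/
theorem torsion_trace_dilaton
    (U : Set (Fin 4 → ℝ)) (hU : IsOpen U)
    (E : (Fin 4 → ℝ) → Matrix (Fin 4) (Fin 4) ℝ)
    (ρM : (Fin 4 → ℝ) → ℝ)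
    (hE : ∀ α μ : Fin 4, ContDiffOn ℝ 1 (fun y => E y α μ) U)
    (hEinv : ∀ x ∈ U, (E x).det ≠ 0)
    (hρM : ContDiffOn ℝ 1 ρM U)
    (hρMpos : ∀ x ∈ U, 0 < ρM x)
    (hdiv : ∀ α : Fin 4, ∀ x ∈ U,
      ∑ μ : Fin 4, fderiv ℝ (fun y => ρM y * E y α μ) x (Pi.single μ 1) = 0) :
    ∀ x ∈ U, ∀ μ : Fin 4,
      ∑ α : Fin 4, ∑ σ : Fin 4, E x α σ * torsion E α σ μ x
        = pd μ (fun y => Real.log (ρM y * |(E y).det|)) x := by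
  intro x hx μ
  classical
  have hUx : U ∈ nhds x := hU.mem_nhds hx
  have dE : ∀ α ν : Fin 4, DifferentiableAt ℝ (fun z => E z α ν) x :=
    fun α ν => ((hE α ν).contDiffAt hUx).differentiableAt one_ne_zero
  have dρ : DifferentiableAt ℝ ρM x := (hρM.contDiffAt hUx).differentiableAt one_ne_zero
  have hdet0 : (E x).det ≠ 0 := hEinv x hx
  have hρ0 : ρM x ≠ 0 := ne_of_gt (hρMpos x hx)
  -- Jacobi: derivative of the determinant
  have hdet : HasFDerivAt (fun y => (E y).det)
      (∑ i, ∑ j, (E x).adjugate j i • fderiv ℝ (fun y => E y i j) x) x :=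
    TorsionAux.hasFDerivAt_det (fun i j => (dE i j).hasFDerivAt)
  -- differentiability of the adjugate entries
  have dAdj : ∀ σ α : Fin 4, DifferentiableAt ℝ (fun y => (E y).adjugate σ α) x := by
    intro σ α
    have hfun2 : (fun y => (E y).adjugate σ α)
        = fun y => ((E y).updateRow α (Pi.single σ 1)).det := by
      funext y; rw [Matrix.adjugate_apply]
    rw [hfun2]
    have hent : ∀ i j : Fin 4,
        HasFDerivAt (fun y => ((E y).updateRow α (Pi.single σ 1)) i j)
          (if i = α then 0 else fderiv ℝ (fun y => E y i j) x) x := by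
      intro i j
      rcases eq_or_ne i α with h | hi
      · subst h
        have hc : (fun y => ((E y).updateRow i (Pi.single σ 1)) i j)
            = fun _ => (Pi.single σ 1 : Fin 4 → ℝ) j := by
          funext y; simp [Matrix.updateRow_self]
        rw [hc, if_pos rfl]
        exact hasFDerivAt_const _ _
      · have hc : (fun y => ((E y).updateRow α (Pi.single σ 1)) i j)
            = fun y => E y i j := by
          funext y; rw [Matrix.updateRow_ne hi]
        rw [hc, if_neg hi]
        exact (dE i j).hasFDerivAt
    exact (TorsionAux.hasFDerivAt_det hent).differentiableAt
  -- the inverse entries, rewritten via the adjugate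
  have hinvfun : ∀ σ α : Fin 4, (fun y => (E y)⁻¹ σ α)
      = fun y => ((E y).det)⁻¹ * (E y).adjugate σ α := by
    intro σ α; funext y
    rw [Matrix.inv_def, Matrix.smul_apply, smul_eq_mul, Ring.inverse_eq_inv]
  have dInv : ∀ σ α : Fin 4, DifferentiableAt ℝ (fun y => (E y)⁻¹ σ α) x := by
    intro σ α
    rw [hinvfun σ α]
    exact (hdet.differentiableAt.inv hdet0).mul (dAdj σ α)
  -- differentiating the identity `E⁻¹ * E = 1`
  have key : ∀ (p q : Fin 4) (v : Fin 4 → ℝ),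
      ∑ α : Fin 4, ((E x)⁻¹ p α * fderiv ℝ (fun y => E y α q) x v
        + E x α q * fderiv ℝ (fun y => (E y)⁻¹ p α) x v) = 0 := by
    intro p q v
    have hsum : HasFDerivAt (fun y => ∑ α : Fin 4, (E y)⁻¹ p α * E y α q)
        (∑ α : Fin 4, ((E x)⁻¹ p α • fderiv ℝ (fun y => E y α q) x
          + E x α q • fderiv ℝ (fun y => (E y)⁻¹ p α) x)) x :=
      HasFDerivAt.fun_sum fun α _ => (dInv p α).hasFDerivAt.mul (dE α q).hasFDerivAt
    have hconst : (fun y => ∑ α : Fin 4, (E y)⁻¹ p α * E y α q) =ᶠ[nhds x]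
        (fun _ => (1 : Matrix (Fin 4) (Fin 4) ℝ) p q) := by
      filter_upwards [hUx] with y hy
      rw [← Matrix.mul_apply, Matrix.nonsing_inv_mul _ (Ne.isUnit (hEinv y hy))]
    have h0 : (∑ α : Fin 4, ((E x)⁻¹ p α • fderiv ℝ (fun y => E y α q) x
        + E x α q • fderiv ℝ (fun y => (E y)⁻¹ p α) x)) = 0 := by
      rw [← hsum.fderiv, hconst.fderiv_eq]
      exact fderiv_const_apply _
    have h3 := DFunLike.congr_fun h0 v
    simpa [ContinuousLinearMap.sum_apply, ContinuousLinearMap.add_apply,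
      ContinuousLinearMap.smul_apply, smul_eq_mul] using h3
  -- the divergence constraint, solved for the divergence of E
  have hdivE : ∀ α : Fin 4, ∑ σ : Fin 4, fderiv ℝ (fun y => E y α σ) x (Pi.single σ 1)
      = -(ρM x)⁻¹ * ∑ σ : Fin 4, fderiv ℝ ρM x (Pi.single σ 1) * E x α σ := by
    intro α
    have h2 := hdiv α x hx
    have h1 : ∀ σ : Fin 4, fderiv ℝ (fun y => ρM y * E y α σ) x (Pi.single σ 1)
        = ρM x * fderiv ℝ (fun y => E y α σ) x (Pi.single σ 1)
          + fderiv ℝ ρM x (Pi.single σ 1) * E x α σ := by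
      intro σ
      rw [(show HasFDerivAt (fun y => ρM y * E y α σ) _ x from
        dρ.hasFDerivAt.mul (dE α σ).hasFDerivAt).fderiv]
      simp only [ContinuousLinearMap.add_apply, ContinuousLinearMap.smul_apply, smul_eq_mul]
      ring
    rw [Finset.sum_congr rfl (fun σ _ => h1 σ), Finset.sum_add_distrib,
      ← Finset.mul_sum] at h2
    have hsolve : ρM x * ∑ σ : Fin 4, fderiv ℝ (fun y => E y α σ) x (Pi.single σ 1)
        = ρM x * (-(ρM x)⁻¹ * ∑ σ : Fin 4, fderiv ℝ ρM x (Pi.single σ 1) * E x α σ) := by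
      rw [← mul_assoc, mul_neg, mul_inv_cancel₀ hρ0]
      linarith
    exact mul_left_cancel₀ hρ0 hsolve
  -- the `1/ρ ∂ρ` identity emerging from the divergence constraint
  have hmid : ∑ α : Fin 4, (E x)⁻¹ μ α
        * ∑ σ : Fin 4, fderiv ℝ (fun y => E y α σ) x (Pi.single σ 1)
      = -((ρM x)⁻¹ * fderiv ℝ ρM x (Pi.single μ 1)) := by
    calc ∑ α : Fin 4, (E x)⁻¹ μ α
          * ∑ σ : Fin 4, fderiv ℝ (fun y => E y α σ) x (Pi.single σ 1)
        = ∑ α : Fin 4, (E x)⁻¹ μ α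
            * (-(ρM x)⁻¹ * ∑ σ : Fin 4, fderiv ℝ ρM x (Pi.single σ 1) * E x α σ) :=
          Finset.sum_congr rfl fun α _ => by rw [hdivE α]
      _ = -(ρM x)⁻¹ * ∑ σ : Fin 4, fderiv ℝ ρM x (Pi.single σ 1)
            * ∑ α : Fin 4, (E x)⁻¹ μ α * E x α σ := by
          simp only [Finset.mul_sum]
          rw [Finset.sum_comm]
          exact Finset.sum_congr rfl fun σ _ => Finset.sum_congr rfl fun α _ => by ring
      _ = -(ρM x)⁻¹ * ∑ σ : Fin 4, fderiv ℝ ρM x (Pi.single σ 1)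
            * (1 : Matrix (Fin 4) (Fin 4) ℝ) μ σ := by
          congr 1
          refine Finset.sum_congr rfl fun σ _ => ?_
          rw [← Matrix.mul_apply, Matrix.nonsing_inv_mul _ (Ne.isUnit hdet0)]
      _ = -((ρM x)⁻¹ * fderiv ℝ ρM x (Pi.single μ 1)) := by
          simp only [Matrix.one_apply, mul_ite, mul_one, mul_zero, Finset.sum_ite_eq,
            Finset.mem_univ, if_true]
          ring
  -- term A
  have hA : ∑ α : Fin 4, ∑ σ : Fin 4,
        E x α σ * fderiv ℝ (fun y => (E y)⁻¹ μ α) x (Pi.single σ 1)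
      = (ρM x)⁻¹ * fderiv ℝ ρM x (Pi.single μ 1) := by
    have step1 : ∀ σ : Fin 4, ∑ α : Fin 4,
          E x α σ * fderiv ℝ (fun y => (E y)⁻¹ μ α) x (Pi.single σ 1)
        = -∑ α : Fin 4, (E x)⁻¹ μ α * fderiv ℝ (fun y => E y α σ) x (Pi.single σ 1) := by
      intro σ
      have h := key μ σ (Pi.single σ 1)
      rw [Finset.sum_add_distrib] at h
      linarith
    calc ∑ α : Fin 4, ∑ σ : Fin 4,
          E x α σ * fderiv ℝ (fun y => (E y)⁻¹ μ α) x (Pi.single σ 1)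
        = ∑ σ : Fin 4, ∑ α : Fin 4,
            E x α σ * fderiv ℝ (fun y => (E y)⁻¹ μ α) x (Pi.single σ 1) :=
          Finset.sum_comm
      _ = ∑ σ : Fin 4, -∑ α : Fin 4,
            (E x)⁻¹ μ α * fderiv ℝ (fun y => E y α σ) x (Pi.single σ 1) :=
          Finset.sum_congr rfl fun σ _ => step1 σ
      _ = -∑ σ : Fin 4, ∑ α : Fin 4,
            (E x)⁻¹ μ α * fderiv ℝ (fun y => E y α σ) x (Pi.single σ 1) := by
          rw [Finset.sum_neg_distrib]
      _ = -∑ α : Fin 4, ∑ σ : Fin 4,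
            (E x)⁻¹ μ α * fderiv ℝ (fun y => E y α σ) x (Pi.single σ 1) := by
          rw [Finset.sum_comm]
      _ = -∑ α : Fin 4, (E x)⁻¹ μ α
            * ∑ σ : Fin 4, fderiv ℝ (fun y => E y α σ) x (Pi.single σ 1) := by
          simp only [Finset.mul_sum]
      _ = (ρM x)⁻¹ * fderiv ℝ ρM x (Pi.single μ 1) := by rw [hmid, neg_neg]
  -- term B
  have hB : ∑ α : Fin 4, ∑ σ : Fin 4,
        E x α σ * fderiv ℝ (fun y => (E y)⁻¹ σ α) x (Pi.single μ 1)
      = -∑ σ : Fin 4, ∑ α : Fin 4,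
          (E x)⁻¹ σ α * fderiv ℝ (fun y => E y α σ) x (Pi.single μ 1) := by
    rw [Finset.sum_comm, ← Finset.sum_neg_distrib]
    refine Finset.sum_congr rfl fun σ _ => ?_
    have h := key σ σ (Pi.single μ 1)
    rw [Finset.sum_add_distrib] at h
    linarith
  -- the right-hand side
  have hRHS : pd μ (fun y => Real.log (ρM y * |(E y).det|)) x
      = (ρM x)⁻¹ * fderiv ℝ ρM x (Pi.single μ 1)
        + ∑ σ : Fin 4, ∑ α : Fin 4,
            (E x)⁻¹ σ α * fderiv ℝ (fun y => E y α σ) x (Pi.single μ 1) := by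
    have hlog1 : HasFDerivAt (fun y => Real.log (ρM y)) ((ρM x)⁻¹ • fderiv ℝ ρM x) x :=
      (Real.hasDerivAt_log hρ0).comp_hasFDerivAt x dρ.hasFDerivAt
    have hlog2 : HasFDerivAt (fun y => Real.log ((E y).det))
        (((E x).det)⁻¹
          • (∑ i, ∑ j, (E x).adjugate j i • fderiv ℝ (fun y => E y i j) x)) x :=
      hdet.log hdet0
    have heq : (fun y => Real.log (ρM y * |(E y).det|)) =ᶠ[nhds x]
        (fun y => Real.log (ρM y) + Real.log ((E y).det)) := by
      filter_upwards [hUx] with y hy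
      rw [← Real.log_abs ((E y).det)]
      exact Real.log_mul (ne_of_gt (hρMpos y hy)) (abs_ne_zero.mpr (hEinv y hy))
    have hpd : pd μ (fun y => Real.log (ρM y * |(E y).det|)) x
        = ((ρM x)⁻¹ • fderiv ℝ ρM x + ((E x).det)⁻¹
            • (∑ i, ∑ j, (E x).adjugate j i • fderiv ℝ (fun y => E y i j) x))
          (Pi.single μ 1) := by
      unfold pd
      rw [heq.fderiv_eq, (show HasFDerivAt (fun y => Real.log (ρM y) + Real.log ((E y).det)) _ x
        from hlog1.add hlog2).fderiv]
    rw [hpd]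
    simp only [ContinuousLinearMap.add_apply, ContinuousLinearMap.smul_apply,
      ContinuousLinearMap.sum_apply, smul_eq_mul]
    congr 1
    rw [Finset.mul_sum, Finset.sum_comm]
    refine Finset.sum_congr rfl fun σ _ => ?_
    rw [Finset.mul_sum]
    refine Finset.sum_congr rfl fun α _ => ?_
    rw [congrFun (hinvfun α σ) x]
    ring
  -- assembling everything
  simp only [torsion, pd, mul_sub, Finset.sum_sub_distrib]
  rw [hA, hB,
    show (fderiv ℝ (fun y => Real.log (ρM y * |(E y).det|)) x) (Pi.single μ 1)
      = pd μ (fun y => Real.log (ρM y * |(E y).det|)) x from rfl, hRHS]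
  ring
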